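/- arXiv:math/0603597 — 2 statements merged into one kernel-verified Lean document; each statement's English description precedes it below -/
import Mathlib

section
/- Let Ω ⊆ ℝ^m be open, s > 1, let (f_ε)_{ε∈(0,1)} be an s-regular net of smooth functions on Ω, and let (a_γ)_{γ∈ℤ₊^m} be complex numbers such that for every h > 0 there exists c > 0 with |a_γ| ≤ c·h^{|γ|}/(γ!)^s for all γ. Then for every compact K ⊆ Ω there exist C > 0, k > 0 and ε₀ ∈ (0,1) such that for every multi-index α, every x ∈ K and every ε ≤ ε₀ the series Σ_γ a_γ·(−i)^{|γ|}·∂^{α+γ} f_ε(x) converges absolutely and |Σ_γ a_γ·(−i)^{|γ|}·∂^{α+γ} f_ε(x)| ≤ C^{|α|+1}·(α!)^s·exp(k·ε^{−1/(2s-1)}). In particular the net (P(D)f_ε)_ε, where P(D) = Σ_γ a_γ D^γ with D^γ = (−i)^{|γ|}∂^γ, is s-regular. -/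
open MeasureTheory Pointwise

noncomputable def pd (m : ℕ) (j : Fin m) (f : (Fin m → ℝ) → ℂ) : (Fin m → ℝ) → ℂ :=
  fun x => fderiv ℝ f x (Pi.single j 1)

/-- Iterated partial derivative `∂^α` associated with a multi-index `α ∈ ℤ₊^m`. -/
noncomputable def pdm (m : ℕ) (α : Fin m → ℕ) (f : (Fin m → ℝ) → ℂ) : (Fin m → ℝ) → ℂ :=
  (List.finRange m).foldr (fun j g => (pd m j)^[α j] g) f

/-- `|α| = α₁ + ⋯ + α_m` for a multi-index. -/
def msize {m : ℕ} (α : Fin m → ℕ) : ℕ := ∑ i, α i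

/-- `α! = α₁! ⋯ α_m!` for a multi-index. -/
def mfact {m : ℕ} (α : Fin m → ℕ) : ℕ := ∏ i, Nat.factorial (α i)

/-- Euclidean norm on `ℝ^m` realized as `Fin m → ℝ`. -/
noncomputable def eunorm {m : ℕ} (x : Fin m → ℝ) : ℝ := Real.sqrt (∑ i, (x i) ^ 2)

/-- A net `(f_ε)` of smooth functions is `s`-regular on `Ω`. -/
def IsRegularNet (m : ℕ) (s : ℝ) (Ω : Set (Fin m → ℝ)) (f : ℝ → (Fin m → ℝ) → ℂ) : Prop :=
  ∀ K : Set (Fin m → ℝ), K ⊆ Ω → IsCompact K →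
    ∃ C > (0:ℝ), ∃ k > (0:ℝ), ∃ ε₀ ∈ Set.Ioo (0:ℝ) 1,
      ∀ α : Fin m → ℕ, ∀ x ∈ K, ∀ ε ∈ Set.Ioo (0:ℝ) 1, ε ≤ ε₀ →
        ‖pdm m α (f ε) x‖ ≤
          C ^ (msize α + 1) * (mfact α : ℝ) ^ s * Real.exp (k * ε ^ (-1 / (2 * s - 1)))

noncomputable def pdl (m : ℕ) (l : List (Fin m)) (F : (Fin m → ℝ) → ℂ) : (Fin m → ℝ) → ℂ :=
  l.foldr (pd m) F

lemma pdl_nil (m : ℕ) (F : (Fin m → ℝ) → ℂ) : pdl m [] F = F := rfl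

lemma pdl_cons (m : ℕ) (j : Fin m) (l : List (Fin m)) (F : (Fin m → ℝ) → ℂ) :
    pdl m (j :: l) F = pd m j (pdl m l F) := rfl

lemma pdl_append (m : ℕ) (l₁ l₂ : List (Fin m)) (F : (Fin m → ℝ) → ℂ) :
    pdl m (l₁ ++ l₂) F = pdl m l₁ (pdl m l₂ F) := by
  simp [pdl, List.foldr_append]

lemma pdl_replicate (m : ℕ) (n : ℕ) (j : Fin m) (F : (Fin m → ℝ) → ℂ) :
    pdl m (List.replicate n j) F = (pd m j)^[n] F := by
  induction n with
  | zero => rfl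
  | succ n ih =>
    rw [List.replicate_succ, pdl_cons, ih, Function.iterate_succ_apply']

def canonL (m : ℕ) (α : Fin m → ℕ) : List (Fin m) :=
  (List.finRange m).flatMap fun j => List.replicate (α j) j

lemma pdm_eq_pdl (m : ℕ) (α : Fin m → ℕ) (F : (Fin m → ℝ) → ℂ) :
    pdm m α F = pdl m (canonL m α) F := by
  unfold pdm canonL
  induction (List.finRange m) with
  | nil => rfl
  | cons j t ih =>
    rw [List.foldr_cons, ih, List.flatMap_cons, pdl_append, pdl_replicate]

lemma count_canonL (m : ℕ) (α : Fin m → ℕ) (j : Fin m) :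
    (canonL m α).count j = α j := by
  unfold canonL
  rw [List.count_flatMap]
  have : ∀ i : Fin m, (List.count j ∘ fun j' => List.replicate (α j') j') i
      = if j = i then α i else 0 := by
    intro i
    simp only [Function.comp_apply, List.count_replicate]
    by_cases h : j = i
    · simp [h]
    · simp only [beq_iff_eq]
      rw [if_neg (fun hh => h hh.symm), if_neg h]
  rw [List.map_congr_left (fun i _ => this i)]
  have : ((List.finRange m).map fun i => if j = i then α i else 0).sum
      = ∑ i : Fin m, if j = i then α i else 0 := by
    rw [Fin.sum_univ_def]
  rw [this, Finset.sum_ite_eq (Finset.univ) j α]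
  simp

variable {m : ℕ} {Ω : Set (Fin m → ℝ)} {F G : (Fin m → ℝ) → ℂ}

lemma pd_contDiffOn (hΩ : IsOpen Ω) (hF : ContDiffOn ℝ (⊤ : ℕ∞) F Ω) (j : Fin m) :
    ContDiffOn ℝ (⊤ : ℕ∞) (pd m j F) Ω := by
  have h1 : ContDiffOn ℝ (⊤ : ℕ∞) (fderiv ℝ F) Ω :=
    hF.fderiv_of_isOpen hΩ (by exact_mod_cast le_top)
  exact h1.clm_apply contDiffOn_const

lemma pd_congr {U : Set (Fin m → ℝ)} (hU : IsOpen U) (h : Set.EqOn F G U) (j : Fin m) :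
    Set.EqOn (pd m j F) (pd m j G) U := by
  intro x hx
  unfold pd
  rw [Filter.EventuallyEq.fderiv_eq (h.eventuallyEq_of_mem (hU.mem_nhds hx))]

lemma pd_comm (hΩ : IsOpen Ω) (hF : ContDiffOn ℝ (⊤ : ℕ∞) F Ω) (i j : Fin m) :
    Set.EqOn (pd m i (pd m j F)) (pd m j (pd m i F)) Ω := by
  intro x hx
  have hx2 : ContDiffAt ℝ (⊤ : ℕ∞) F x := hF.contDiffAt (hΩ.mem_nhds hx)
  have hsymm : IsSymmSndFDerivAt ℝ F x :=
    hx2.isSymmSndFDerivAt (n := ((⊤ : ℕ∞) : WithTop ℕ∞)) (by simp only [minSmoothness_of_isRCLikeNormedField]; exact WithTop.coe_le_coe.mpr le_top)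
  have hd : DifferentiableAt ℝ (fderiv ℝ F) x := by
    have : ContDiffAt ℝ (⊤ : ℕ∞) (fderiv ℝ F) x :=
      hx2.fderiv_right (by exact_mod_cast le_top)
    exact this.differentiableAt (by simp)
  have key : ∀ v w : Fin m → ℝ,
      pd m i (fun y => fderiv ℝ F y w) x = fderiv ℝ (fderiv ℝ F) x (Pi.single i 1) w := by
    intro v w
    unfold pd
    rw [fderiv_clm_apply hd (differentiableAt_const w)]
    simp
  unfold pd
  have e1 : fderiv ℝ (fun y => fderiv ℝ F y (Pi.single j 1)) x (Pi.single i 1)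
      = fderiv ℝ (fderiv ℝ F) x (Pi.single i 1) (Pi.single j 1) := by
    rw [fderiv_clm_apply hd (differentiableAt_const _)]; simp
  have e2 : fderiv ℝ (fun y => fderiv ℝ F y (Pi.single i 1)) x (Pi.single j 1)
      = fderiv ℝ (fderiv ℝ F) x (Pi.single j 1) (Pi.single i 1) := by
    rw [fderiv_clm_apply hd (differentiableAt_const _)]; simp
  rw [e1, e2, hsymm]

lemma pdl_contDiffOn (hΩ : IsOpen Ω) (hF : ContDiffOn ℝ (⊤ : ℕ∞) F Ω) (l : List (Fin m)) :
    ContDiffOn ℝ (⊤ : ℕ∞) (pdl m l F) Ω := by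
  induction l with
  | nil => exact hF
  | cons j t ih => exact pd_contDiffOn hΩ ih j

lemma pdl_congr {U : Set (Fin m → ℝ)} (hU : IsOpen U) (h : Set.EqOn F G U) (l : List (Fin m)) :
    Set.EqOn (pdl m l F) (pdl m l G) U := by
  induction l with
  | nil => exact h
  | cons j t ih => exact pd_congr hU ih j

lemma pdl_perm (hΩ : IsOpen Ω) (hF : ContDiffOn ℝ (⊤ : ℕ∞) F Ω) {l₁ l₂ : List (Fin m)}
    (hp : l₁.Perm l₂) : Set.EqOn (pdl m l₁ F) (pdl m l₂ F) Ω := by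
  induction hp with
  | nil => exact fun x _ => rfl
  | cons j p ih => exact pd_congr hΩ ih j
  | swap i j l => exact pd_comm hΩ (pdl_contDiffOn hΩ hF l) j i
  | trans p1 p2 ih1 ih2 => exact fun x hx => (ih1 hx).trans (ih2 hx)

lemma pdm_contDiffOn (hΩ : IsOpen Ω) (hF : ContDiffOn ℝ (⊤ : ℕ∞) F Ω) (α : Fin m → ℕ) :
    ContDiffOn ℝ (⊤ : ℕ∞) (pdm m α F) Ω := by
  rw [pdm_eq_pdl]; exact pdl_contDiffOn hΩ hF _

lemma pdm_pdm (hΩ : IsOpen Ω) (hF : ContDiffOn ℝ (⊤ : ℕ∞) F Ω) (α γ : Fin m → ℕ) :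
    Set.EqOn (pdm m α (pdm m γ F)) (pdm m (α + γ) F) Ω := by
  rw [pdm_eq_pdl, pdm_eq_pdl, pdm_eq_pdl, ← pdl_append]
  apply pdl_perm hΩ hF
  rw [List.perm_iff_count]
  intro j
  simp [List.count_append, count_canonL, Pi.add_apply]

lemma pd_pdm (hΩ : IsOpen Ω) (hF : ContDiffOn ℝ (⊤ : ℕ∞) F Ω) (j : Fin m) (β : Fin m → ℕ) :
    Set.EqOn (pd m j (pdm m β F)) (pdm m (β + Pi.single j 1) F) Ω := by
  rw [pdm_eq_pdl, pdm_eq_pdl]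
  have h0 : pd m j (pdl m (canonL m β) F) = pdl m (j :: canonL m β) F := rfl
  rw [h0]
  apply pdl_perm hΩ hF
  rw [List.perm_iff_count]
  intro i
  rw [List.count_cons, count_canonL, count_canonL, Pi.add_apply, Pi.single_apply]
  by_cases h : i = j
  · simp [h]
  · simp [h, Ne.symm h]

lemma msize_add {m : ℕ} (α γ : Fin m → ℕ) : msize (α + γ) = msize α + msize γ := by
  unfold msize; simp [Finset.sum_add_distrib]

lemma mfact_pos {m : ℕ} (α : Fin m → ℕ) : 0 < mfact α :=
  Finset.prod_pos fun i _ => Nat.factorial_pos _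

lemma nat_fact_add_le (a b : ℕ) : (a + b).factorial ≤ 2 ^ (a + b) * (a.factorial * b.factorial) := by
  have h1 : (a + b).choose a * a.factorial * b.factorial = (a + b).factorial := by
    have := Nat.choose_mul_factorial_mul_factorial (Nat.le_add_right a b)
    simpa using this
  have h2 : (a + b).choose a ≤ 2 ^ (a + b) := by
    calc (a + b).choose a ≤ ∑ i ∈ Finset.range (a + b + 1), (a + b).choose i :=
          Finset.single_le_sum (fun i _ => Nat.zero_le _) (by
            simp [Finset.mem_range])
      _ = 2 ^ (a + b) := Nat.sum_range_choose (a + b)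
  calc (a + b).factorial = (a + b).choose a * a.factorial * b.factorial := h1.symm
    _ ≤ 2 ^ (a + b) * a.factorial * b.factorial := by
        exact Nat.mul_le_mul_right _ (Nat.mul_le_mul_right _ h2)
    _ = 2 ^ (a + b) * (a.factorial * b.factorial) := by ring

lemma mfact_add_le {m : ℕ} (α γ : Fin m → ℕ) :
    mfact (α + γ) ≤ 2 ^ (msize α + msize γ) * (mfact α * mfact γ) := by
  unfold mfact msize
  calc (∏ i, ((α + γ) i).factorial)
      ≤ ∏ i, 2 ^ (α i + γ i) * ((α i).factorial * (γ i).factorial) :=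
        Finset.prod_le_prod' fun i _ => nat_fact_add_le (α i) (γ i)
    _ = 2 ^ (∑ i, α i + ∑ i, γ i) * ((∏ i, (α i).factorial) * ∏ i, (γ i).factorial) := by
        rw [Finset.prod_mul_distrib, Finset.prod_mul_distrib, Finset.prod_pow_eq_pow_sum,
          Finset.sum_add_distrib]

lemma rpow_pow_comm {b : ℝ} (hb : 0 ≤ b) (n : ℕ) (t : ℝ) : (b ^ n) ^ t = (b ^ t) ^ n := by
  rw [← Real.rpow_natCast b n, ← Real.rpow_mul hb, mul_comm, Real.rpow_mul hb,
    Real.rpow_natCast]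

lemma summable_geom_msize (m : ℕ) {r : ℝ} (hr0 : 0 ≤ r) (hr1 : r < 1) :
    Summable fun γ : Fin m → ℕ => r ^ msize γ := by
  induction m with
  | zero =>
    exact .of_finite
  | succ n ih =>
    rw [← (Fin.consEquiv (fun _ : Fin (n + 1) => ℕ)).summable_iff]
    simp only [Function.comp_def]
    have hme : ∀ p : ℕ × (Fin n → ℕ),
        r ^ msize ((Fin.consEquiv (fun _ : Fin (n + 1) => ℕ)) p) = r ^ p.1 * r ^ msize p.2 := by
      intro p
      rw [← pow_add]
      congr 1
      show (∑ i, Fin.cons p.1 p.2 i) = p.1 + msize p.2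
      rw [Fin.sum_univ_succ]
      simp [msize]
    have h1 : Summable fun k : ℕ => r ^ k := summable_geometric_of_lt_one hr0 hr1
    have hsum : Summable fun p : ℕ × (Fin n → ℕ) => r ^ p.1 * r ^ msize p.2 := by
      refine (summable_prod_of_nonneg ?_).2 ⟨?_, ?_⟩
      · exact fun p => mul_nonneg (pow_nonneg hr0 _) (pow_nonneg hr0 _)
      · intro x
        show Summable fun y : Fin n → ℕ => r ^ x * r ^ msize y
        exact ih.mul_left _
      · show Summable fun x : ℕ => ∑' y : Fin n → ℕ, r ^ x * r ^ msize y
        simp only [tsum_mul_left]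
        exact h1.mul_right (∑' y : Fin n → ℕ, r ^ msize y)
    exact hsum.congr fun p => (hme p).symm

lemma opnorm_le_sum_pd {m : ℕ} (L : (Fin m → ℝ) →L[ℝ] ℂ) :
    ‖L‖ ≤ ∑ i, ‖L (Pi.single i 1)‖ := by
  refine L.opNorm_le_bound (Finset.sum_nonneg fun i _ => norm_nonneg _) fun v => ?_
  have hv : v = ∑ i, v i • (Pi.single i 1 : Fin m → ℝ) := by
    funext j
    simp [Finset.sum_apply, Pi.single_apply]
  have hLv : L v = ∑ i, v i • L (Pi.single i 1) := by
    conv_lhs => rw [hv]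
    simp
  calc ‖L v‖ = ‖∑ i, v i • L (Pi.single i 1)‖ := by rw [hLv]
    _ ≤ ∑ i, ‖v i • L (Pi.single i 1)‖ := norm_sum_le _ _
    _ ≤ ∑ i, ‖L (Pi.single i 1)‖ * ‖v‖ := by
        refine Finset.sum_le_sum fun i _ => ?_
        rw [norm_smul, mul_comm]
        exact mul_le_mul_of_nonneg_left (norm_le_pi_norm v i) (norm_nonneg _)
    _ = (∑ i, ‖L (Pi.single i 1)‖) * ‖v‖ := by rw [Finset.sum_mul]

lemma master (m : ℕ) (s : ℝ) (hs : 1 < s) (Ω : Set (Fin m → ℝ)) (hΩ : IsOpen Ω)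
    (f : ℝ → (Fin m → ℝ) → ℂ)
    (hfsm : ∀ ε ∈ Set.Ioo (0:ℝ) 1, ContDiffOn ℝ (⊤ : ℕ∞) (f ε) Ω)
    (hf : IsRegularNet m s Ω f)
    (a : (Fin m → ℕ) → ℂ)
    (ha : ∀ h > (0:ℝ), ∃ c > (0:ℝ), ∀ γ : Fin m → ℕ,
      ‖a γ‖ ≤ c * h ^ (msize γ) / (mfact γ : ℝ) ^ s)
    (K : Set (Fin m → ℝ)) (hKΩ : K ⊆ Ω) (hK : IsCompact K) :
    ∃ C > (0:ℝ), ∃ k > (0:ℝ), ∃ ε₀ ∈ Set.Ioo (0:ℝ) 1,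
      ∀ α : Fin m → ℕ, ∀ x ∈ K, ∀ ε ∈ Set.Ioo (0:ℝ) 1, ε ≤ ε₀ →
        (Summable fun γ : Fin m → ℕ =>
          ‖a γ * (-Complex.I) ^ (msize γ) * pdm m (α + γ) (f ε) x‖) ∧
        ‖∑' γ : Fin m → ℕ,
            a γ * (-Complex.I) ^ (msize γ) * pdm m (α + γ) (f ε) x‖ ≤
          C ^ (msize α + 1) * (mfact α : ℝ) ^ s * Real.exp (k * ε ^ (-1 / (2 * s - 1))) ∧
        pdm m α (fun y => ∑' γ : Fin m → ℕ,
            a γ * (-Complex.I) ^ (msize γ) * pdm m γ (f ε) y) x =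
          ∑' γ : Fin m → ℕ, a γ * (-Complex.I) ^ (msize γ) * pdm m (α + γ) (f ε) x := by
  obtain ⟨δ, δpos, hδ⟩ := hK.exists_cthickening_subset_open hΩ hKΩ
  set K' := Metric.cthickening δ K with hK'def
  have hK' : IsCompact K' := hK.cthickening
  have hKK' : K ⊆ K' := Metric.self_subset_cthickening K
  obtain ⟨C, hC, k, hk, ε₀, hε₀, hbd⟩ := hf K' hδ hK'
  set C₁ := max C 1 with hC₁def
  have hC₁1 : (1:ℝ) ≤ C₁ := le_max_right _ _
  have hC₁0 : (0:ℝ) < C₁ := lt_of_lt_of_le one_pos hC₁1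
  have h2s : (0:ℝ) < (2:ℝ) ^ s := Real.rpow_pos_of_pos two_pos s
  set h := ((2:ℝ) ^ s * 2 * C₁)⁻¹ with hdef
  have hpos : 0 < h := by positivity
  obtain ⟨c, hc, hA⟩ := ha h hpos
  set E : ℝ → ℝ := fun ε => Real.exp (k * ε ^ (-1 / (2 * s - 1))) with hEdef
  have hEpos : ∀ ε, 0 < E ε := fun ε => Real.exp_pos _
  have hs0 : (0:ℝ) ≤ s := le_of_lt (lt_trans one_pos hs)
  -- upgraded bound with C₁
  have hbd1 : ∀ (β : Fin m → ℕ), ∀ y ∈ K', ∀ ε ∈ Set.Ioo (0:ℝ) 1, ε ≤ ε₀ →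
      ‖pdm m β (f ε) y‖ ≤ C₁ ^ (msize β + 1) * (mfact β : ℝ) ^ s * E ε := by
    intro β y hy ε hε hεε
    refine le_trans (hbd β y hy ε hε hεε) ?_
    have h1 : C ^ (msize β + 1) ≤ C₁ ^ (msize β + 1) :=
      pow_le_pow_left₀ hC.le (le_max_left _ _) _
    have h2 : (0:ℝ) ≤ (mfact β : ℝ) ^ s := Real.rpow_nonneg (Nat.cast_nonneg _) s
    exact mul_le_mul_of_nonneg_right (mul_le_mul_of_nonneg_right h1 h2) (hEpos ε).le
  set D : (Fin m → ℕ) → ℝ :=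
    fun β => c * C₁ * (C₁ * (2:ℝ) ^ s) ^ msize β * (mfact β : ℝ) ^ s with hDdef
  have hDpos : ∀ β, 0 < D β := by
    intro β
    have : (0:ℝ) < (mfact β : ℝ) ^ s :=
      Real.rpow_pos_of_pos (by exact_mod_cast mfact_pos β) s
    positivity
  -- the key term bound
  have TB : ∀ (β γ : Fin m → ℕ), ∀ y ∈ K', ∀ ε ∈ Set.Ioo (0:ℝ) 1, ε ≤ ε₀ →
      ‖a γ * (-Complex.I) ^ (msize γ) * pdm m (β + γ) (f ε) y‖ ≤
        D β * E ε * (2⁻¹ : ℝ) ^ msize γ := by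
    intro β γ y hy ε hε hεε
    have habsX : ‖a γ * (-Complex.I) ^ (msize γ)‖ = ‖a γ‖ := by
      rw [norm_mul, norm_pow]
      simp
    have hFγpos : (0:ℝ) < (mfact γ : ℝ) ^ s :=
      Real.rpow_pos_of_pos (by exact_mod_cast mfact_pos γ) s
    have hFβ : (0:ℝ) ≤ (mfact β : ℝ) ^ s := Real.rpow_nonneg (Nat.cast_nonneg _) s
    have step0 : ‖a γ * (-Complex.I) ^ (msize γ) * pdm m (β + γ) (f ε) y‖ ≤
        (c * h ^ msize γ / (mfact γ : ℝ) ^ s) *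
          (C₁ ^ (msize (β + γ) + 1) * (mfact (β + γ) : ℝ) ^ s * E ε) := by
      rw [norm_mul, habsX]
      exact mul_le_mul (hA γ) (hbd1 (β + γ) y hy ε hε hεε)
        (norm_nonneg _) (by positivity)
    have step1 : ((mfact (β + γ) : ℝ)) ^ s ≤
        ((2:ℝ) ^ s) ^ msize β * ((2:ℝ) ^ s) ^ msize γ *
          ((mfact β : ℝ) ^ s * (mfact γ : ℝ) ^ s) := by
      have hnat : (mfact (β + γ) : ℝ) ≤
          (2:ℝ) ^ (msize β + msize γ) * ((mfact β : ℝ) * (mfact γ : ℝ)) := by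
        exact_mod_cast mfact_add_le β γ
      calc ((mfact (β + γ) : ℝ)) ^ s
          ≤ ((2:ℝ) ^ (msize β + msize γ) * ((mfact β : ℝ) * (mfact γ : ℝ))) ^ s :=
            Real.rpow_le_rpow (Nat.cast_nonneg _) hnat hs0
        _ = ((2:ℝ) ^ (msize β + msize γ)) ^ s * ((mfact β : ℝ) * (mfact γ : ℝ)) ^ s :=
            Real.mul_rpow (by positivity) (by positivity)
        _ = ((2:ℝ) ^ s) ^ msize β * ((2:ℝ) ^ s) ^ msize γ *
              ((mfact β : ℝ) ^ s * (mfact γ : ℝ) ^ s) := by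
            rw [rpow_pow_comm (by norm_num) (msize β + msize γ) s, pow_add,
              Real.mul_rpow (Nat.cast_nonneg _) (Nat.cast_nonneg _)]
    have step2 : (c * h ^ msize γ / (mfact γ : ℝ) ^ s) *
          (C₁ ^ (msize (β + γ) + 1) * (mfact (β + γ) : ℝ) ^ s * E ε) ≤
        (c * h ^ msize γ / (mfact γ : ℝ) ^ s) *
          (C₁ ^ (msize β + msize γ + 1) *
            (((2:ℝ) ^ s) ^ msize β * ((2:ℝ) ^ s) ^ msize γ *
              ((mfact β : ℝ) ^ s * (mfact γ : ℝ) ^ s)) * E ε) := by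
      rw [msize_add]
      refine mul_le_mul_of_nonneg_left ?_ (by positivity)
      refine mul_le_mul_of_nonneg_right ?_ (hEpos ε).le
      exact mul_le_mul_of_nonneg_left step1 (by positivity)
    have hmul : h * (C₁ * (2:ℝ) ^ s) = 2⁻¹ := by
      rw [hdef]
      field_simp
    have step3 : (c * h ^ msize γ / (mfact γ : ℝ) ^ s) *
          (C₁ ^ (msize β + msize γ + 1) *
            (((2:ℝ) ^ s) ^ msize β * ((2:ℝ) ^ s) ^ msize γ *
              ((mfact β : ℝ) ^ s * (mfact γ : ℝ) ^ s)) * E ε) =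
        D β * E ε * (2⁻¹ : ℝ) ^ msize γ := by
      rw [hDdef, ← hmul]
      field_simp
      ring
    calc ‖a γ * (-Complex.I) ^ (msize γ) * pdm m (β + γ) (f ε) y‖
        ≤ _ := step0
      _ ≤ _ := step2
      _ = _ := step3
  have hgeo : Summable fun γ : Fin m → ℕ => (2⁻¹ : ℝ) ^ msize γ :=
    summable_geom_msize m (by norm_num) (by norm_num)
  set S := ∑' γ : Fin m → ℕ, (2⁻¹ : ℝ) ^ msize γ with hSdef
  have hS1 : (1:ℝ) ≤ S := by
    have h0 : (2⁻¹ : ℝ) ^ msize (0 : Fin m → ℕ) = 1 := by simp [msize]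
    calc (1:ℝ) = (2⁻¹ : ℝ) ^ msize (0 : Fin m → ℕ) := h0.symm
      _ ≤ S := Summable.le_tsum hgeo 0 fun γ _ => by positivity
  have hSpos : (0:ℝ) < S := lt_of_lt_of_le one_pos hS1
  have hsummAbs : ∀ (β : Fin m → ℕ), ∀ y ∈ K', ∀ ε ∈ Set.Ioo (0:ℝ) 1, ε ≤ ε₀ →
      Summable fun γ : Fin m → ℕ =>
        ‖a γ * (-Complex.I) ^ (msize γ) * pdm m (β + γ) (f ε) y‖ := by
    intro β y hy ε hε hεε
    refine Summable.of_nonneg_of_le (fun γ => norm_nonneg _)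
      (fun γ => TB β γ y hy ε hε hεε) ?_
    have := hgeo.mul_left (D β * E ε)
    simpa [mul_assoc] using this
  have htsum : ∀ (β : Fin m → ℕ), ∀ y ∈ K', ∀ ε ∈ Set.Ioo (0:ℝ) 1, ε ≤ ε₀ →
      ‖∑' γ : Fin m → ℕ,
          a γ * (-Complex.I) ^ (msize γ) * pdm m (β + γ) (f ε) y‖ ≤ D β * E ε * S := by
    intro β y hy ε hε hεε
    have h1 : ‖∑' γ : Fin m → ℕ,
          a γ * (-Complex.I) ^ (msize γ) * pdm m (β + γ) (f ε) y‖ ≤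
        ∑' γ : Fin m → ℕ,
          ‖a γ * (-Complex.I) ^ (msize γ) * pdm m (β + γ) (f ε) y‖ := by
      have := norm_tsum_le_tsum_norm
        (hsummAbs β y hy ε hε hεε)
      simpa using this
    refine h1.trans ?_
    have h2 : (∑' γ : Fin m → ℕ,
          ‖a γ * (-Complex.I) ^ (msize γ) * pdm m (β + γ) (f ε) y‖) ≤
        ∑' γ : Fin m → ℕ, D β * E ε * (2⁻¹ : ℝ) ^ msize γ := by
      refine Summable.tsum_le_tsum (fun γ => TB β γ y hy ε hε hεε) (hsummAbs β y hy ε hε hεε) ?_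
      have := hgeo.mul_left (D β * E ε)
      simpa [mul_assoc] using this
    refine h2.trans (le_of_eq ?_)
    rw [mul_assoc, tsum_mul_left, ← hSdef, mul_assoc]
  set C' := max (C₁ * (2:ℝ) ^ s) (c * C₁ * S) with hC'def
  have hC'pos : (0:ℝ) < C' := lt_of_lt_of_le (by positivity) (le_max_left _ _)
  have hfinal : ∀ (β : Fin m → ℕ) (ε : ℝ),
      D β * E ε * S ≤ C' ^ (msize β + 1) * (mfact β : ℝ) ^ s * E ε := by
    intro β ε
    have h1 : (C₁ * (2:ℝ) ^ s) ^ msize β ≤ C' ^ msize β :=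
      pow_le_pow_left₀ (by positivity) (le_max_left _ _) _
    have h2 : c * C₁ * S ≤ C' := le_max_right _ _
    have hFβ : (0:ℝ) ≤ (mfact β : ℝ) ^ s := Real.rpow_nonneg (Nat.cast_nonneg _) s
    calc D β * E ε * S
        = (c * C₁ * S) * (C₁ * (2:ℝ) ^ s) ^ msize β * ((mfact β : ℝ) ^ s) * E ε := by
          rw [hDdef]; ring
      _ ≤ C' * C' ^ msize β * ((mfact β : ℝ) ^ s) * E ε := by
          have hmm := mul_le_mul h2 h1 (by positivity) hC'pos.le
          exact mul_le_mul_of_nonneg_right (mul_le_mul_of_nonneg_right hmm hFβ) (hEpos ε).le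
      _ = C' ^ (msize β + 1) * (mfact β : ℝ) ^ s * E ε := by rw [pow_succ]; ring
  refine ⟨C', hC'pos, k, hk, ε₀, hε₀, ?_⟩
  intro α x hx ε hε hεε
  have hxK' : x ∈ K' := hKK' hx
  refine ⟨hsummAbs α x hxK' ε hε hεε, (htsum α x hxK' ε hε hεε).trans (hfinal α ε), ?_⟩
  -- the exchange of pdm and the sum
  have hfs : ContDiffOn ℝ (⊤ : ℕ∞) (f ε) Ω := hfsm ε hε
  set U := Metric.ball x δ with hUdef
  have hUopen : IsOpen U := Metric.isOpen_ball
  have hUK' : U ⊆ K' :=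
    (Metric.ball_subset_thickening hx δ).trans (Metric.thickening_subset_cthickening δ K)
  have hUΩ : U ⊆ Ω := hUK'.trans hδ
  have hUconn : IsPreconnected U := (convex_ball x δ).isPreconnected
  have hxU : x ∈ U := Metric.mem_ball_self δpos
  have htop1 : (1 : ℕ∞) ≤ ((⊤ : ℕ∞) : ℕ∞) := le_top
  have hTsm : ∀ β γ : Fin m → ℕ, ContDiffOn ℝ (⊤ : ℕ∞)
      (fun y => a γ * (-Complex.I) ^ (msize γ) * pdm m (β + γ) (f ε) y) Ω :=
    fun β γ => contDiffOn_const.mul (pdm_contDiffOn hΩ hfs _)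
  have hTdiffAt : ∀ (β γ : Fin m → ℕ), ∀ y ∈ Ω, DifferentiableAt ℝ
      (fun y => a γ * (-Complex.I) ^ (msize γ) * pdm m (β + γ) (f ε) y) y := by
    intro β γ y hy
    exact ((hTsm β γ).differentiableOn (by simp)).differentiableAt (hΩ.mem_nhds hy)
  have hpdT : ∀ (β γ : Fin m → ℕ) (i : Fin m), ∀ y ∈ Ω,
      pd m i (fun y => a γ * (-Complex.I) ^ (msize γ) * pdm m (β + γ) (f ε) y) y =
        a γ * (-Complex.I) ^ (msize γ) * pdm m ((β + Pi.single i 1) + γ) (f ε) y := by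
    intro β γ i y hy
    have hG : DifferentiableAt ℝ (pdm m (β + γ) (f ε)) y :=
      ((pdm_contDiffOn hΩ hfs (β + γ)).differentiableOn (by simp)).differentiableAt
        (hΩ.mem_nhds hy)
    unfold pd
    rw [fderiv_const_mul hG]
    simp only [ContinuousLinearMap.coe_smul', Pi.smul_apply, smul_eq_mul]
    congr 1
    have h1 : fderiv ℝ (pdm m (β + γ) (f ε)) y (Pi.single i 1) =
        pd m i (pdm m (β + γ) (f ε)) y := rfl
    have h2 : (β + γ) + Pi.single i 1 = (β + Pi.single i 1) + γ := add_right_comm β γ _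
    rw [h1, pd_pdm hΩ hfs i (β + γ) hy, h2]
  have hdnorm : ∀ (β γ : Fin m → ℕ), ∀ y ∈ U,
      ‖fderiv ℝ (fun z => a γ * (-Complex.I) ^ (msize γ) * pdm m (β + γ) (f ε) z) y‖ ≤
        (∑ i, D (β + Pi.single i 1)) * E ε * (2⁻¹ : ℝ) ^ msize γ := by
    intro β γ y hy
    refine (opnorm_le_sum_pd _).trans ?_
    have hterm : ∀ i : Fin m,
        ‖fderiv ℝ (fun z => a γ * (-Complex.I) ^ (msize γ) * pdm m (β + γ) (f ε) z) y
          (Pi.single i 1)‖ ≤ D (β + Pi.single i 1) * E ε * (2⁻¹ : ℝ) ^ msize γ := by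
      intro i
      have e1 : fderiv ℝ (fun z => a γ * (-Complex.I) ^ (msize γ) * pdm m (β + γ) (f ε) z) y
          (Pi.single i 1) =
          pd m i (fun z => a γ * (-Complex.I) ^ (msize γ) * pdm m (β + γ) (f ε) z) y := rfl
      rw [e1, hpdT β γ i y (hUΩ hy)]
      exact TB (β + Pi.single i 1) γ y (hUK' hy) ε hε hεε
    calc (∑ i, ‖fderiv ℝ (fun z => a γ * (-Complex.I) ^ (msize γ) * pdm m (β + γ) (f ε) z) y
            (Pi.single i 1)‖)
        ≤ ∑ i, D (β + Pi.single i 1) * E ε * (2⁻¹ : ℝ) ^ msize γ :=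
          Finset.sum_le_sum fun i _ => hterm i
      _ = (∑ i, D (β + Pi.single i 1)) * E ε * (2⁻¹ : ℝ) ^ msize γ := by
          rw [← Finset.sum_mul, ← Finset.sum_mul]
  have main : ∀ l : List (Fin m), Set.EqOn
      (pdl m l (fun y => ∑' γ : Fin m → ℕ, a γ * (-Complex.I) ^ (msize γ) * pdm m γ (f ε) y))
      (fun y => ∑' γ : Fin m → ℕ,
        a γ * (-Complex.I) ^ (msize γ) * pdm m ((fun j => l.count j) + γ) (f ε) y) U := by
    intro l
    induction l with
    | nil =>
      intro y _
      refine tsum_congr fun γ => ?_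
      have h0 : ((fun j => ([] : List (Fin m)).count j) + γ) = γ := by
        funext j; simp
      rw [h0]
    | cons j t ih =>
      intro y hy
      rw [pdl_cons, pd_congr hUopen ih j hy]
      set β : Fin m → ℕ := fun j' => t.count j' with hβ
      have hu : Summable (fun γ : Fin m → ℕ =>
          (∑ i, D (β + Pi.single i 1)) * E ε * (2⁻¹ : ℝ) ^ msize γ) := by
        have := hgeo.mul_left ((∑ i, D (β + Pi.single i 1)) * E ε)
        simpa [mul_assoc] using this
      have hf0 : Summable (fun γ : Fin m → ℕ =>
          a γ * (-Complex.I) ^ (msize γ) * pdm m (β + γ) (f ε) x) := by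
        refine Summable.of_norm ?_
        have := hsummAbs β x hxK' ε hε hεε
        simpa using this
      have hder : HasFDerivAt
          (fun z => ∑' γ : Fin m → ℕ, a γ * (-Complex.I) ^ (msize γ) * pdm m (β + γ) (f ε) z)
          (∑' γ : Fin m → ℕ, fderiv ℝ
            (fun z => a γ * (-Complex.I) ^ (msize γ) * pdm m (β + γ) (f ε) z) y) y :=
        hasFDerivAt_tsum_of_isPreconnected hu hUopen hUconn
          (fun γ z hz => (hTdiffAt β γ z (hUΩ hz)).hasFDerivAt)
          (fun γ z hz => hdnorm β γ z hz) hxU hf0 hy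
      have e2 : pd m j
          (fun z => ∑' γ : Fin m → ℕ, a γ * (-Complex.I) ^ (msize γ) * pdm m (β + γ) (f ε) z) y
          = (∑' γ : Fin m → ℕ, fderiv ℝ
              (fun z => a γ * (-Complex.I) ^ (msize γ) * pdm m (β + γ) (f ε) z) y)
            (Pi.single j 1) := by
        show fderiv ℝ _ y (Pi.single j 1) = _
        rw [hder.fderiv]
      rw [e2]
      have hsummF : Summable fun γ : Fin m → ℕ => fderiv ℝ
          (fun z => a γ * (-Complex.I) ^ (msize γ) * pdm m (β + γ) (f ε) z) y :=
        Summable.of_norm_bounded hu (fun γ => hdnorm β γ y hy)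
      have happ := (ContinuousLinearMap.apply ℝ ℂ
        ((Pi.single j 1 : Fin m → ℝ))).map_tsum hsummF
      simp only [ContinuousLinearMap.apply_apply] at happ
      rw [happ]
      refine tsum_congr fun γ => ?_
      have e3 : fderiv ℝ (fun z => a γ * (-Complex.I) ^ (msize γ) * pdm m (β + γ) (f ε) z) y
          (Pi.single j 1) =
          pd m j (fun z => a γ * (-Complex.I) ^ (msize γ) * pdm m (β + γ) (f ε) z) y := rfl
      rw [e3, hpdT β γ j y (hUΩ hy)]
      have e4 : (β + Pi.single j 1) = fun j' => (j :: t).count j' := by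
        funext j'
        rw [Pi.add_apply, List.count_cons, hβ, Pi.single_apply]
        by_cases hjj : j' = j
        · simp [hjj]
        · simp [hjj, Ne.symm hjj]
      rw [e4]
  have hmain := main (canonL m α) hxU
  have hcnt : (fun j => (canonL m α).count j) = α := funext fun j => count_canonL m α j
  rw [pdm_eq_pdl, hmain, hcnt]

/-- an s-ultradifferential operator `P(D) = Σ_γ a_γ D^γ` maps s-regular
nets to s-regular nets, with absolutely convergent series and uniform bounds. -/
theorem ultradifferential_preserves_regular
    (m : ℕ) (hm : 0 < m) (s : ℝ) (hs : 1 < s)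
    (Ω : Set (Fin m → ℝ)) (hΩ : IsOpen Ω)
    (f : ℝ → (Fin m → ℝ) → ℂ)
    (hfsm : ∀ ε ∈ Set.Ioo (0:ℝ) 1, ContDiffOn ℝ (⊤ : ℕ∞) (f ε) Ω)
    (hf : IsRegularNet m s Ω f)
    (a : (Fin m → ℕ) → ℂ)
    (ha : ∀ h > (0:ℝ), ∃ c > (0:ℝ), ∀ γ : Fin m → ℕ,
      ‖a γ‖ ≤ c * h ^ (msize γ) / (mfact γ : ℝ) ^ s) :
    (∀ K : Set (Fin m → ℝ), K ⊆ Ω → IsCompact K →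
      ∃ C > (0:ℝ), ∃ k > (0:ℝ), ∃ ε₀ ∈ Set.Ioo (0:ℝ) 1,
        ∀ α : Fin m → ℕ, ∀ x ∈ K, ∀ ε ∈ Set.Ioo (0:ℝ) 1, ε ≤ ε₀ →
          (Summable fun γ : Fin m → ℕ =>
            ‖a γ * (-Complex.I) ^ (msize γ) * pdm m (α + γ) (f ε) x‖) ∧
          ‖∑' γ : Fin m → ℕ,
              a γ * (-Complex.I) ^ (msize γ) * pdm m (α + γ) (f ε) x‖ ≤
            C ^ (msize α + 1) * (mfact α : ℝ) ^ s * Real.exp (k * ε ^ (-1 / (2 * s - 1)))) ∧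
    IsRegularNet m s Ω (fun ε x =>
      ∑' γ : Fin m → ℕ, a γ * (-Complex.I) ^ (msize γ) * pdm m γ (f ε) x) := by
  constructor
  · intro K hKΩ hK
    obtain ⟨C, hC, k, hk, ε₀, hε₀, H⟩ := master m s hs Ω hΩ f hfsm hf a ha K hKΩ hK
    exact ⟨C, hC, k, hk, ε₀, hε₀, fun α x hx ε hε hεε =>
      ⟨(H α x hx ε hε hεε).1, (H α x hx ε hε hεε).2.1⟩⟩
  · intro K hKΩ hK
    obtain ⟨C, hC, k, hk, ε₀, hε₀, H⟩ := master m s hs Ω hΩ f hfsm hf a ha K hKΩ hK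
    refine ⟨C, hC, k, hk, ε₀, hε₀, fun α x hx ε hε hεε => ?_⟩
    have h3 := (H α x hx ε hε hεε).2.2
    show ‖pdm m α
      (fun y => ∑' γ : Fin m → ℕ, a γ * (-Complex.I) ^ (msize γ) * pdm m γ (f ε) y) x‖ ≤ _
    rw [h3]
    exact (H α x hx ε hε hεε).2.1
end

section
/- Let s > 1 and let (f_ε)_{ε∈(0,1)} be a net of smooth functions on ℝ^m such that for some compact set K ⊆ ℝ^m and ε₁ ∈ (0,1): supp f_ε ⊆ K for all ε ≤ ε₁, and there exist C₁ > 0 and k₁ > 0 with |∂^α f_ε(x)| ≤ C₁^{|α|+1}·(α!)^s·exp(k₁·ε^{−1/(2s-1)}) for all multi-indices α, all x ∈ ℝ^m and all ε ≤ ε₁. Then there exist C > 0 and k₂ > 0 such that |f̂_ε(ξ)| ≤ C·exp(k₁·ε^{−1/(2s-1)} − k₂·|ξ|^{1/s}) for all ξ ∈ ℝ^m and all ε ≤ ε₁. -/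
open MeasureTheory Pointwise

/-- Fourier transform `f̂(ξ) = ∫ e^{-i⟨x,ξ⟩} f(x) dx`. -/
noncomputable def FT (m : ℕ) (f : (Fin m → ℝ) → ℂ) (ξ : Fin m → ℝ) : ℂ :=
  ∫ x : Fin m → ℝ, Complex.exp (-(Complex.I * ((∑ i, x i * ξ i : ℝ) : ℂ))) * f x


section PWhelpers

lemma myeL_exists : True := trivial

noncomputable def myeL (m : ℕ) : (Fin m → ℝ) →L[ℝ] EuclideanSpace ℝ (Fin m) :=
  ((EuclideanSpace.equiv (Fin m) ℝ).symm :
    (Fin m → ℝ) ≃L[ℝ] EuclideanSpace ℝ (Fin m)).toContinuousLinearMap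

noncomputable def myLb (m : ℕ) : (Fin m → ℝ) →L[ℝ] (Fin m → ℝ) →L[ℝ] ℝ :=
  (2 * Real.pi)⁻¹ •
    ((((innerSL ℝ (E := EuclideanSpace ℝ (Fin m))).comp (myeL m)).flip.comp (myeL m)).flip)

lemma myLb_apply (m : ℕ) (v w : Fin m → ℝ) :
    myLb m v w = (2 * Real.pi)⁻¹ * ∑ i, v i * w i := by
  simp [myLb, myeL, PiLp.inner_apply, RCLike.inner_apply, conj_trivial]
  exact Finset.sum_congr rfl (fun i _ => mul_comm _ _)

lemma FT_eq (m : ℕ) (f : (Fin m → ℝ) → ℂ) (ξ : Fin m → ℝ) :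
    FT m f ξ = VectorFourier.fourierIntegral Real.fourierChar volume (myLb m).toLinearMap₁₂ f ξ := by
  unfold FT VectorFourier.fourierIntegral
  congr 1
  ext x
  rw [ContinuousLinearMap.toLinearMap₁₂_apply_apply_apply, Circle.smul_def, Real.fourierChar_apply, myLb_apply]
  congr 2
  have hπ : (Real.pi : ℂ) ≠ 0 := by exact_mod_cast Real.pi_ne_zero
  push_cast
  field_simp

lemma pd_contDiff (m : ℕ) (j : Fin m) {g : (Fin m → ℝ) → ℂ} (hg : ContDiff ℝ (⊤:ℕ∞) g) :
    ContDiff ℝ (⊤:ℕ∞) (pd m j g) :=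
  (hg.fderiv_right (le_of_eq ENat.coe_top_add_one)).clm_apply contDiff_const

lemma pd_tsupport (m : ℕ) (j : Fin m) (g : (Fin m → ℝ) → ℂ) :
    tsupport (pd m j g) ⊆ tsupport g := by
  apply closure_minimal _ (isClosed_tsupport g)
  intro x hx
  have : fderiv ℝ g x ≠ 0 := by
    intro h; apply hx; simp [pd, h]
  exact support_fderiv_subset ℝ this

lemma FT_pd (m : ℕ) (j : Fin m) {g : (Fin m → ℝ) → ℂ} (hg : ContDiff ℝ (⊤:ℕ∞) g)
    (hcs : HasCompactSupport g) (ξ : Fin m → ℝ) :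
    FT m (pd m j g) ξ = (Complex.I * (ξ j : ℝ)) * FT m g ξ := by
  have hint : Integrable g := hg.continuous.integrable_of_hasCompactSupport hcs
  have hdiff : Differentiable ℝ g := hg.differentiable (by simp)
  have hcs' : HasCompactSupport (fderiv ℝ g) := hcs.fderiv ℝ
  have hint' : Integrable (fderiv ℝ g) :=
    ((hg.fderiv_right (le_of_eq ENat.coe_top_add_one)).continuous).integrable_of_hasCompactSupport
      hcs'
  have key := VectorFourier.fourierIntegral_fderiv (L := myLb m) (μ := volume) hint hdiff hint'
  have h1 : FT m (pd m j g) ξ =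
      VectorFourier.fourierIntegral Real.fourierChar volume (myLb m).toLinearMap₁₂
        (fderiv ℝ g) ξ (Pi.single j 1) := by
    rw [FT_eq, Real.fourierIntegral_continuousLinearMap_apply' hint']
    rfl
  rw [h1, key, VectorFourier.fourierSMulRight_apply, ← FT_eq]
  have h2 : ((-(myLb m).flip) ξ) (Pi.single j 1) = -((2*Real.pi)⁻¹ * ξ j) := by
    simp [ContinuousLinearMap.flip_apply, myLb_apply]
    rw [Finset.sum_eq_single j]
    · simp
    · intro b _ hb; simp [Pi.single_eq_of_ne hb]
    · simp
  rw [h2]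
  have hπ : (Real.pi : ℂ) ≠ 0 := by exact_mod_cast Real.pi_ne_zero
  push_cast
  rw [smul_eq_mul, Complex.real_smul]
  push_cast
  field_simp

lemma pdm_single (m : ℕ) (j : Fin m) (n : ℕ) (f : (Fin m → ℝ) → ℂ) :
    pdm m (Pi.single j n) f = (pd m j)^[n] f := by
  have key : ∀ l : List (Fin m), l.Nodup →
      List.foldr (fun j' g => (pd m j')^[(Pi.single j n : Fin m → ℕ) j'] g) f l
        = if j ∈ l then (pd m j)^[n] f else f := by
    intro l
    induction l with
    | nil => simp
    | cons a t ih =>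
      intro h
      rcases List.nodup_cons.1 h with ⟨ha, ht⟩
      rw [List.foldr_cons, ih ht]
      by_cases hq : a = j
      · subst hq
        simp [ha, Pi.single_eq_same]
      · have : (Pi.single j n : Fin m → ℕ) a = 0 := by simp [Pi.single_apply, hq]
        rw [this]
        simp [Function.iterate_zero, List.mem_cons, hq, Ne.symm hq]
  rw [pdm, key (List.finRange m) (List.nodup_finRange m), if_pos (List.mem_finRange j)]

lemma msize_single (m : ℕ) (j : Fin m) (n : ℕ) : msize (Pi.single j n) = n := by
  simp [msize, Finset.sum_pi_single']

lemma mfact_single (m : ℕ) (j : Fin m) (n : ℕ) : mfact (Pi.single j n) = n.factorial := by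
  rw [mfact, Finset.prod_eq_single j]
  · simp
  · intro b _ hb; simp [Pi.single_eq_of_ne hb]
  · simp

lemma FT_bound (m : ℕ) {K : Set (Fin m → ℝ)} (hK : IsCompact K) {h : (Fin m → ℝ) → ℂ}
    (hcont : Continuous h) (hsupp : tsupport h ⊆ K) {M : ℝ}
    (hM : ∀ x, ‖h x‖ ≤ M) (ξ : Fin m → ℝ) :
    ‖FT m h ξ‖ ≤ (volume K).toReal * M := by
  set F : (Fin m → ℝ) → ℂ :=
    fun x => Complex.exp (-(Complex.I * ((∑ i, x i * ξ i : ℝ) : ℂ))) * h x with hF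
  have hzero : ∀ x ∉ K, F x = 0 := by
    intro x hx
    have : h x = 0 := image_eq_zero_of_notMem_tsupport (fun hc => hx (hsupp hc))
    simp [hF, this]
  have heq : FT m h ξ = ∫ x in K, F x := by
    rw [FT, ← setIntegral_eq_integral_of_forall_compl_eq_zero hzero]
  rw [heq]
  have : ‖∫ x in K, F x‖ ≤ M * (volume K).toReal := by
    refine norm_setIntegral_le_of_norm_le_const hK.measure_lt_top (fun x _ => ?_)
    rw [hF]
    simp only [norm_mul]
    calc ‖Complex.exp (-(Complex.I * ((∑ i, x i * ξ i : ℝ) : ℂ)))‖ * ‖h x‖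
        ≤ 1 * M := by
          apply mul_le_mul _ (hM x) (norm_nonneg _) zero_le_one
          rw [Complex.norm_exp]
          simp
      _ = M := one_mul M
  calc ‖∫ x in K, F x‖ = ‖∫ x in K, F x‖ := rfl
    _ ≤ M * (volume K).toReal := this
    _ = (volume K).toReal * M := mul_comm _ _

end PWhelpers

set_option maxHeartbeats 1000000 in
/-- Paley–Wiener-type estimate: a compactly supported net with uniform
Gevrey-`s` bounds has Fourier transform decaying like `exp(-k₂ |ξ|^{1/s})`. -/
theorem fourier_decay_of_regular (m : ℕ) (hm : 0 < m) (s : ℝ) (hs : 1 < s)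
    (f : ℝ → (Fin m → ℝ) → ℂ)
    (hsm : ∀ ε ∈ Set.Ioo (0:ℝ) 1, ContDiff ℝ (⊤ : ℕ∞) (f ε))
    (K : Set (Fin m → ℝ)) (hK : IsCompact K)
    (ε₁ : ℝ) (hε₁ : ε₁ ∈ Set.Ioo (0:ℝ) 1)
    (hsupp : ∀ ε ∈ Set.Ioo (0:ℝ) 1, ε ≤ ε₁ → tsupport (f ε) ⊆ K)
    (C₁ k₁ : ℝ) (hC₁ : 0 < C₁) (hk₁ : 0 < k₁)
    (hbd : ∀ (α : Fin m → ℕ) (x : Fin m → ℝ), ∀ ε ∈ Set.Ioo (0:ℝ) 1, ε ≤ ε₁ →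
      ‖pdm m α (f ε) x‖ ≤
        C₁ ^ (msize α + 1) * (mfact α : ℝ) ^ s * Real.exp (k₁ * ε ^ (-1 / (2 * s - 1)))) :
    ∃ C > (0:ℝ), ∃ k₂ > (0:ℝ), ∀ ξ : Fin m → ℝ, ∀ ε ∈ Set.Ioo (0:ℝ) 1, ε ≤ ε₁ →
      ‖FT m (f ε) ξ‖ ≤
        C * Real.exp (k₁ * ε ^ (-1 / (2 * s - 1)) - k₂ * eunorm ξ ^ (1 / s)) := by
  have hm' : Nonempty (Fin m) := ⟨⟨0, hm⟩⟩
  have hs0 : (0:ℝ) < s := lt_trans one_pos hs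
  have hsqm : (0:ℝ) < Real.sqrt m := Real.sqrt_pos.2 (by exact_mod_cast hm)
  set e1 : ℝ := Real.exp 1 with he1
  have he1p : 0 < e1 := Real.exp_pos 1
  set c : ℝ := (Real.sqrt m * e1 * C₁)⁻¹ with hc
  have hcpos : 0 < c := by positivity
  set A : ℝ := (volume K).toReal with hA
  have hA0 : 0 ≤ A := ENNReal.toReal_nonneg
  refine ⟨(A * C₁ + 1) * e1, by positivity, c ^ (1/s), Real.rpow_pos_of_pos hcpos _, ?_⟩
  intro ξ ε hε hεle
  set Eε := Real.exp (k₁ * ε ^ (-1 / (2 * s - 1))) with hEε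
  have hEεp : 0 < Eε := Real.exp_pos _
  set g := f ε with hgdef
  have hg : ContDiff ℝ (⊤:ℕ∞) g := hsm ε hε
  have hts : tsupport g ⊆ K := hsupp ε hε hεle
  have iter : ∀ (j : Fin m) (n : ℕ), ContDiff ℝ (⊤:ℕ∞) ((pd m j)^[n] g) ∧
      tsupport ((pd m j)^[n] g) ⊆ tsupport g := by
    intro j n
    induction n with
    | zero => exact ⟨hg, subset_rfl⟩
    | succ n ih =>
      rw [Function.iterate_succ_apply']
      exact ⟨pd_contDiff m j ih.1, (pd_tsupport m j _).trans ih.2⟩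
  have itercs : ∀ (j : Fin m) (n : ℕ), HasCompactSupport ((pd m j)^[n] g) := fun j n =>
    HasCompactSupport.intro hK (fun x hx =>
      image_eq_zero_of_notMem_tsupport (fun hcc => hx (hts ((iter j n).2 hcc))))
  have hFTiter : ∀ (j : Fin m) (n : ℕ) (ξ : Fin m → ℝ),
      FT m ((pd m j)^[n] g) ξ = (Complex.I * (ξ j : ℝ))^n * FT m g ξ := by
    intro j n ξ
    induction n with
    | zero => simp
    | succ n ih =>
      rw [Function.iterate_succ_apply', FT_pd m j (iter j n).1 (itercs j n), ih, pow_succ]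
      ring
  have core : ∀ (j : Fin m) (n : ℕ),
      |ξ j| ^ n * ‖FT m g ξ‖ ≤
        A * (C₁ ^ (n+1) * ((n.factorial : ℕ) : ℝ) ^ s * Eε) := by
    intro j n
    have hb : ∀ x, ‖(pd m j)^[n] g x‖ ≤
        C₁ ^ (n+1) * ((n.factorial : ℕ):ℝ) ^ s * Eε := by
      intro x
      have h := hbd (Pi.single j n) x ε hε hεle
      rwa [pdm_single, msize_single, mfact_single] at h
    have hFb := FT_bound m hK (iter j n).1.continuous ((iter j n).2.trans hts) hb ξ
    rw [hFTiter j n ξ, norm_mul, norm_pow, norm_mul, Complex.norm_I, Complex.norm_real, Real.norm_eq_abs,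
      one_mul] at hFb
    exact hFb
  obtain ⟨j, -, hj⟩ := Finset.exists_max_image Finset.univ (fun i => |ξ i|) Finset.univ_nonempty
  set r := eunorm ξ with hrdef
  have hr0 : 0 ≤ r := Real.sqrt_nonneg _
  have hrj : r ≤ Real.sqrt m * |ξ j| := by
    rw [hrdef]
    unfold eunorm
    have h1 : ∑ i, (ξ i)^2 ≤ (m:ℝ) * (ξ j)^2 := by
      calc ∑ i, (ξ i)^2 ≤ ∑ _i : Fin m, (ξ j)^2 := by
            refine Finset.sum_le_sum (fun i _ => ?_)
            have h2 := hj i (Finset.mem_univ i)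
            calc (ξ i)^2 = |ξ i|^2 := (sq_abs _).symm
              _ ≤ |ξ j|^2 := pow_le_pow_left₀ (abs_nonneg _) h2 2
              _ = (ξ j)^2 := sq_abs _
        _ = (m:ℝ) * (ξ j)^2 := by
            simp [Finset.sum_const, Finset.card_univ, nsmul_eq_mul]
    calc Real.sqrt (∑ i, (ξ i)^2) ≤ Real.sqrt ((m:ℝ) * (ξ j)^2) := Real.sqrt_le_sqrt h1
      _ = Real.sqrt m * |ξ j| := by
          rw [Real.sqrt_mul (by positivity), Real.sqrt_sq_eq_abs]
  set u : ℝ := r * c with hu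
  have hu0 : 0 ≤ u := mul_nonneg hr0 hcpos.le
  set x₀ : ℝ := u ^ (1/s) with hx₀def
  have hx0nn : 0 ≤ x₀ := Real.rpow_nonneg hu0 _
  have hx₀eq : x₀ = c ^ (1/s) * r ^ (1/s) := by
    rw [hx₀def, hu, Real.mul_rpow hr0 hcpos.le, mul_comm]
  set N := ⌊x₀⌋₊ with hN
  have hNle : (N:ℝ) ≤ x₀ := Nat.floor_le hx0nn
  have hx₀lt : x₀ < N + 1 := Nat.lt_floor_add_one x₀
  have hNs : ((N:ℝ)) ^ s ≤ u := by
    calc ((N:ℝ)) ^ s ≤ x₀ ^ s := Real.rpow_le_rpow (Nat.cast_nonneg N) hNle hs0.le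
      _ = u := by
          rw [hx₀def, ← Real.rpow_mul hu0, one_div, inv_mul_cancel₀ (ne_of_gt hs0),
            Real.rpow_one]
  have hfact : ((N.factorial : ℕ):ℝ) ^ s ≤ ((N:ℝ) ^ s) ^ N := by
    have h1 : ((N.factorial : ℕ):ℝ) ≤ ((N:ℝ))^(N:ℕ) := by
      exact_mod_cast Nat.factorial_le_pow N
    calc ((N.factorial : ℕ):ℝ) ^ s ≤ (((N:ℝ))^(N:ℕ)) ^ s :=
          Real.rpow_le_rpow (Nat.cast_nonneg _) h1 hs0.le
      _ = ((N:ℝ) ^ s) ^ N := by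
          rw [← Real.rpow_natCast (N:ℝ) N, ← Real.rpow_mul (Nat.cast_nonneg N), mul_comm,
            Real.rpow_mul (Nat.cast_nonneg N), Real.rpow_natCast]
  have hexpN : Real.exp (-1) ^ N = Real.exp (-(N:ℝ)) := by
    rw [← Real.exp_nat_mul]
    norm_num
  have main : ‖FT m g ξ‖ ≤ A * C₁ * Eε * Real.exp (-(N:ℝ)) := by
    rcases Nat.eq_zero_or_pos N with h0 | hpos
    · have h := core j 0
      rw [h0]
      simp only [pow_zero, one_mul, Nat.factorial_zero, Nat.cast_one, Real.one_rpow,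
        Nat.cast_zero, neg_zero, Real.exp_zero, pow_one, mul_one] at h ⊢
      calc ‖FT m g ξ‖ ≤ A * (C₁ * Eε) := by simpa using h
        _ = A * C₁ * Eε := by ring
    · have hN1 : (1:ℝ) ≤ (N:ℝ) := by exact_mod_cast hpos
      have hu1 : (1:ℝ) ≤ u := by
        calc (1:ℝ) = 1 ^ s := (Real.one_rpow s).symm
          _ ≤ ((N:ℝ)) ^ s := Real.rpow_le_rpow zero_le_one hN1 hs0.le
          _ ≤ u := hNs
      have hrpos : 0 < r := by
        rcases lt_or_eq_of_le hr0 with h | h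
        · exact h
        · exfalso; rw [hu, ← h, zero_mul] at hu1; linarith
      have htpos : 0 < |ξ j| := by
        have h := lt_of_lt_of_le hrpos hrj
        nlinarith [abs_nonneg (ξ j), hsqm]
      have hBle : C₁ * (N:ℝ)^s ≤ |ξ j| * Real.exp (-1) := by
        have h1 : C₁ * (N:ℝ)^s ≤ C₁ * u := mul_le_mul_of_nonneg_left hNs hC₁.le
        have h2 : C₁ * u = r * (Real.sqrt m)⁻¹ * e1⁻¹ := by
          rw [hu, hc]
          field_simp
        have h3 : r * (Real.sqrt m)⁻¹ * e1⁻¹ ≤ |ξ j| * e1⁻¹ := by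
          apply mul_le_mul_of_nonneg_right _ (by positivity)
          calc r * (Real.sqrt m)⁻¹ = r / Real.sqrt m := by ring
            _ ≤ |ξ j| := by
                rw [div_le_iff₀ hsqm]
                nlinarith [hrj, hsqm]
          
        have h4 : Real.exp (-1) = e1⁻¹ := by rw [Real.exp_neg, he1]
        rw [h4]
        calc C₁ * (N:ℝ)^s ≤ C₁ * u := h1
          _ = r * (Real.sqrt m)⁻¹ * e1⁻¹ := h2
          _ ≤ |ξ j| * e1⁻¹ := h3
      have hpow : C₁^N * ((N.factorial : ℕ):ℝ)^s ≤ (|ξ j| * Real.exp (-1))^N := by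
        calc C₁^N * ((N.factorial : ℕ):ℝ)^s ≤ C₁^N * ((N:ℝ)^s)^N :=
              mul_le_mul_of_nonneg_left hfact (pow_nonneg hC₁.le N)
          _ = (C₁ * (N:ℝ)^s)^N := (mul_pow _ _ _).symm
          _ ≤ (|ξ j| * Real.exp (-1))^N := by
              apply pow_le_pow_left₀ (by positivity) hBle
      have final : |ξ j|^N * ‖FT m g ξ‖ ≤
          |ξ j|^N * (A * C₁ * Eε * Real.exp (-(N:ℝ))) := by
        calc |ξ j|^N * ‖FT m g ξ‖
            ≤ A * (C₁ ^ (N+1) * ((N.factorial : ℕ):ℝ)^s * Eε) := core j N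
          _ = (A * C₁ * Eε) * (C₁^N * ((N.factorial : ℕ):ℝ)^s) := by rw [pow_succ]; ring
          _ ≤ (A * C₁ * Eε) * (|ξ j| * Real.exp (-1))^N :=
              mul_le_mul_of_nonneg_left hpow (by positivity)
          _ = |ξ j|^N * (A * C₁ * Eε * Real.exp (-(N:ℝ))) := by
              rw [mul_pow, hexpN]; ring
      exact le_of_mul_le_mul_left final (pow_pos htpos N)
  have hexple : Real.exp (-(N:ℝ)) ≤ Real.exp (1 - x₀) := Real.exp_le_exp.2 (by linarith)
  calc ‖FT m g ξ‖
      ≤ A * C₁ * Eε * Real.exp (-(N:ℝ)) := main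
    _ ≤ A * C₁ * Eε * Real.exp (1 - x₀) := by
        apply mul_le_mul_of_nonneg_left hexple (by positivity)
    _ = (A * C₁) * e1 * (Eε * Real.exp (-x₀)) := by
        rw [show (1:ℝ) - x₀ = 1 + (-x₀) by ring, Real.exp_add, he1]; ring
    _ ≤ (A * C₁ + 1) * e1 * (Eε * Real.exp (-x₀)) := by
        have : (0:ℝ) ≤ Eε * Real.exp (-x₀) := by positivity
        nlinarith [he1p, this, hA0, hC₁.le, mul_nonneg hA0 hC₁.le]
    _ = (A * C₁ + 1) * e1 *
        Real.exp (k₁ * ε ^ (-1 / (2 * s - 1)) - c ^ (1/s) * eunorm ξ ^ (1 / s)) := by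
        rw [hEε, ← Real.exp_add, hx₀eq, hrdef]
        congr 1
end
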